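/- Let n ≥ 1 and let T₁, T₂, T₃ : ℝ → Mₙ(ℂ) be differentiable on an interval I ⊆ ℝ and satisfy Nahm's equations on I. Then for every fixed η, ζ ∈ ℂ the function s ↦ det(η·1ₙ + A(ζ)(s)) is constant on I, i.e. the spectral curve det(η·1ₙ + A(ζ)) = 0 is invariant under the Nahm flow. -/

import Mathlib

open Matrix Complex

attribute [local instance] Matrix.normedAddCommGroup Matrix.normedSpace

section Aux

variable {n : ℕ}

/-- Entry extraction from a matrix-valued derivative. -/
lemma nahm_entry_deriv {f : ℝ → Matrix (Fin n) (Fin n) ℂ} {f' : Matrix (Fin n) (Fin n) ℂ}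
    {s : ℝ} (h : HasDerivAt f f' s) (i j : Fin n) :
    HasDerivAt (fun t => f t i j) (f' i j) s :=
  (hasDerivAt_pi.mp ((hasDerivAt_pi.mp h) i)) j

/-- Jacobi's formula, derivative form. -/
lemma nahm_det_deriv {M : ℝ → Matrix (Fin n) (Fin n) ℂ} {N : Matrix (Fin n) (Fin n) ℂ}
    {s : ℝ} (h : ∀ i j, HasDerivAt (fun t => M t i j) (N i j) s) :
    HasDerivAt (fun t => (M t).det) ((Matrix.adjugate (M s) * N).trace) s := by
  have key : HasDerivAt (fun t => (M t).det)
      (∑ σ : Equiv.Perm (Fin n), ((Equiv.Perm.sign σ : ℤ) : ℂ) *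
        ∑ j, (∏ i ∈ Finset.univ.erase j, M s (σ i) i) * N (σ j) j) s := by
    simp only [Matrix.det_apply']
    apply HasDerivAt.fun_sum
    intro σ _
    have := HasDerivAt.finset_prod (u := (Finset.univ : Finset (Fin n)))
      (f := fun i t => M t (σ i) i) (f' := fun i => N (σ i) i) (fun i _ => h (σ i) i)
    simpa [smul_eq_mul, mul_comm] using (this.const_mul (((Equiv.Perm.sign σ : ℤ) : ℂ)))
  convert key using 1
  -- trace (adj (M s) * N) = ∑ j, det (updateCol (M s) j (col j of N))
  have step1 : (Matrix.adjugate (M s) * N).trace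
      = ∑ j, ((M s).updateCol j (fun k => N k j)).det := by
    rw [Matrix.trace]
    refine Finset.sum_congr rfl fun j _ => ?_
    have : (Matrix.adjugate (M s) * N).diag j
        = (Matrix.adjugate (M s) *ᵥ (fun k => N k j)) j := by
      simp [Matrix.diag, Matrix.mul_apply, Matrix.mulVec, dotProduct]
    rw [this, ← Matrix.cramer_eq_adjugate_mulVec, Matrix.cramer_apply]
  rw [step1]
  -- expand each determinant and swap the sums
  have step2 : ∀ j : Fin n, ((M s).updateCol j (fun k => N k j)).det
      = ∑ σ : Equiv.Perm (Fin n), ((Equiv.Perm.sign σ : ℤ) : ℂ) *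
          ((∏ i ∈ Finset.univ.erase j, M s (σ i) i) * N (σ j) j) := by
    intro j
    rw [Matrix.det_apply']
    refine Finset.sum_congr rfl fun σ _ => ?_
    congr 1
    rw [← Finset.mul_prod_erase _ _ (Finset.mem_univ j)]
    rw [mul_comm]
    congr 1
    · refine Finset.prod_congr rfl fun i hi => ?_
      rw [Matrix.updateCol_apply, if_neg (Finset.mem_erase.mp hi).1]
    · rw [Matrix.updateCol_apply, if_pos rfl]
  simp only [step2]
  rw [Finset.sum_comm]
  exact Finset.sum_congr rfl fun σ _ => (Finset.mul_sum _ _ _).symm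

/-- The Lax-pair trace identity. -/
lemma nahm_trace_zero (M B : Matrix (Fin n) (Fin n) ℂ) :
    (Matrix.adjugate M * (M * B - B * M)).trace = 0 := by
  have h1 : (Matrix.adjugate M * (M * B)).trace = M.det * B.trace := by
    rw [show Matrix.adjugate M * (M * B) = (Matrix.adjugate M * M) * B from (Matrix.mul_assoc _ _ _).symm,
      Matrix.adjugate_mul, Matrix.smul_mul, Matrix.one_mul, Matrix.trace_smul, smul_eq_mul]
  have h2 : (Matrix.adjugate M * (B * M)).trace = M.det * B.trace := by
    rw [show Matrix.adjugate M * (B * M) = (Matrix.adjugate M * B) * M from (Matrix.mul_assoc _ _ _).symm,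
      Matrix.trace_mul_comm, show M * (Matrix.adjugate M * B) = (M * Matrix.adjugate M) * B from (Matrix.mul_assoc _ _ _).symm, Matrix.mul_adjugate, Matrix.smul_mul, Matrix.one_mul, Matrix.trace_smul,
      smul_eq_mul]
  rw [Matrix.mul_sub, Matrix.trace_sub, h1, h2, sub_self]

end Aux

/-- If `T₁ T₂ T₃` are differentiable on an interval `I` (a convex subset of `ℝ`) and satisfy
Nahm's equations there, then for every fixed `η, ζ ∈ ℂ` the function
`s ↦ det(η·1ₙ + A(ζ)(s))`, with `A(ζ) = (T₁+iT₂) − 2iT₃ζ + (T₁−iT₂)ζ²`, is constant on `I`: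
the spectral curve is invariant under the Nahm flow. -/
theorem stmt1 (n : ℕ) (hn : 1 ≤ n) (I : Set ℝ) (hI : Convex ℝ I)
    (T₁ T₂ T₃ T₁' T₂' T₃' : ℝ → Matrix (Fin n) (Fin n) ℂ)
    (h1 : ∀ s ∈ I, HasDerivAt T₁ (T₁' s) s)
    (h2 : ∀ s ∈ I, HasDerivAt T₂ (T₂' s) s)
    (h3 : ∀ s ∈ I, HasDerivAt T₃ (T₃' s) s)
    (hN1 : ∀ s ∈ I, T₁' s = T₂ s * T₃ s - T₃ s * T₂ s)
    (hN2 : ∀ s ∈ I, T₂' s = T₃ s * T₁ s - T₁ s * T₃ s)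
    (hN3 : ∀ s ∈ I, T₃' s = T₁ s * T₂ s - T₂ s * T₁ s)
    (η ζ : ℂ) :
    ∀ s ∈ I, ∀ t ∈ I,
      (η • (1 : Matrix (Fin n) (Fin n) ℂ) + ((T₁ s + Complex.I • T₂ s)
          - (2 * Complex.I * ζ) • T₃ s + ζ ^ 2 • (T₁ s - Complex.I • T₂ s))).det =
      (η • (1 : Matrix (Fin n) (Fin n) ℂ) + ((T₁ t + Complex.I • T₂ t)
          - (2 * Complex.I * ζ) • T₃ t + ζ ^ 2 • (T₁ t - Complex.I • T₂ t))).det := by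
  set M : ℝ → Matrix (Fin n) (Fin n) ℂ := fun s =>
    η • (1 : Matrix (Fin n) (Fin n) ℂ) + ((T₁ s + Complex.I • T₂ s)
      - (2 * Complex.I * ζ) • T₃ s + ζ ^ 2 • (T₁ s - Complex.I • T₂ s)) with hM
  set B : ℝ → Matrix (Fin n) (Fin n) ℂ := fun s =>
    (-Complex.I) • T₃ s + ζ • (T₁ s - Complex.I • T₂ s) with hB
  -- the matrix-valued derivative of M
  have hMderiv : ∀ s ∈ I, HasDerivAt M (M s * B s - B s * M s) s := by
    intro s hs
    have hd : HasDerivAt M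
        (0 + ((T₁' s + Complex.I • T₂' s)
          - (2 * Complex.I * ζ) • T₃' s + ζ ^ 2 • (T₁' s - Complex.I • T₂' s))) s := by
      exact (hasDerivAt_const s _).add
        ((((h1 s hs).add ((h2 s hs).const_smul Complex.I)).sub
          ((h3 s hs).const_smul (2 * Complex.I * ζ))).add
          (((h1 s hs).sub ((h2 s hs).const_smul Complex.I)).const_smul (ζ ^ 2)))
    convert hd using 1
    rw [hN1 s hs, hN2 s hs, hN3 s hs, hM, hB]
    simp only [zero_add, Matrix.add_mul, Matrix.mul_add, Matrix.sub_mul, Matrix.mul_sub,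
      Matrix.smul_mul, Matrix.mul_smul, Matrix.one_mul, Matrix.mul_one, smul_add, smul_sub,
      smul_smul]
    match_scalars <;> first
      | ring1
      | (ring_nf; simp [Complex.I_sq]; try ring1)
  -- derivative of the determinant is zero on I
  have hdet : ∀ s ∈ I, HasDerivWithinAt (fun t => (M t).det) 0 I s := by
    intro s hs
    have h0 : (Matrix.adjugate (M s) * (M s * B s - B s * M s)).trace = 0 :=
      nahm_trace_zero (M s) (B s)
    have := nahm_det_deriv (fun i j => nahm_entry_deriv (hMderiv s hs) i j)
    rw [h0] at this
    exact this.hasDerivWithinAt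
  intro s hs t ht
  have key : ‖(M t).det - (M s).det‖ ≤ 0 * ‖t - s‖ := by
    refine hI.norm_image_sub_le_of_norm_hasDerivWithin_le hdet (fun x _ => ?_) hs ht
    simp
  have : (M t).det = (M s).det := by
    have := key.trans_eq (zero_mul _)
    have h' := norm_sub_eq_zero_iff.mp (le_antisymm this (norm_nonneg _))
    exact h'
  exact this.symm
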